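/- Let P be an irreducible row-stochastic S×S real matrix (S ≥ 2) with stationary distribution μ and mean first passage times T_{ij}. Let P̃ be any row-stochastic S×S matrix and set E = P̃ − P. If ‖E‖_∞ < 2 / (S · max_{i≠j} T_{ij}), then P̃ is also irreducible, and its (unique) stationary distribution μ̃ satisfies, for every state j, |μ̃_j − μ_j| ≤ μ_j · (S‖E‖_∞ / 2) · max_{i≠j} T_{ij}. -/

import Mathlib

/-- A row-stochastic matrix: nonnegative entries, each row sums to 1. -/
def RowStochastic {S : ℕ} (P : Matrix (Fin S) (Fin S) ℝ) : Prop :=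
  (∀ i j, 0 ≤ P i j) ∧ ∀ i, ∑ j, P i j = 1

/-- Irreducibility of a Markov transition matrix: every state reaches every state. -/
def MCIrreducible {S : ℕ} (P : Matrix (Fin S) (Fin S) ℝ) : Prop :=
  ∀ i j, ∃ n : ℕ, 1 ≤ n ∧ 0 < (P ^ n) i j

/-- `μ` is a stationary distribution of `P`. -/
def IsStationaryDist {S : ℕ} (P : Matrix (Fin S) (Fin S) ℝ) (μ : Fin S → ℝ) : Prop :=
  (∀ j, 0 ≤ μ j) ∧ (∑ j, μ j = 1) ∧ ∀ j, ∑ i, μ i * P i j = μ j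

/-- `T` is the matrix of mean first passage times of `P`: the unique positive
solution of `T i j = 1 + ∑_{k ≠ j} P i k * T k j`. -/
def IsMFPT {S : ℕ} (P T : Matrix (Fin S) (Fin S) ℝ) : Prop :=
  (∀ i j, 0 < T i j) ∧
    ∀ i j, T i j = 1 + ∑ k ∈ Finset.univ.filter (fun k => k ≠ j), P i k * T k j

/-- The entrywise max-norm ‖E‖_∞ of a matrix. -/
noncomputable def matNormInf {S : ℕ} (E : Matrix (Fin S) (Fin S) ℝ) : ℝ :=
  ⨆ i, ⨆ j, |E i j|

lemma abs_le_matNormInf {S : ℕ} (E : Matrix (Fin S) (Fin S) ℝ) (i j : Fin S) :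
    |E i j| ≤ matNormInf E := by
  have h1 : |E i j| ≤ ⨆ k, |E i k| :=
    le_ciSup (f := fun k => |E i k|) (Set.Finite.bddAbove (Set.finite_range _)) j
  exact h1.trans
    (le_ciSup (f := fun i => ⨆ k, |E i k|) (Set.Finite.bddAbove (Set.finite_range _)) i)

lemma matpow_nonneg {S : ℕ} (Pt : Matrix (Fin S) (Fin S) ℝ)
    (h : ∀ i j, 0 ≤ Pt i j) : ∀ n i j, 0 ≤ (Pt ^ n) i j := by
  intro n
  induction n with
  | zero =>
      intro i j
      simp only [pow_zero, Matrix.one_apply]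
      split <;> norm_num
  | succ n ih =>
      intro i j
      rw [pow_succ, Matrix.mul_apply]
      exact Finset.sum_nonneg fun k _ => mul_nonneg (ih i k) (h k j)

lemma matpow_trans {S : ℕ} (Pt : Matrix (Fin S) (Fin S) ℝ)
    (h : ∀ i j, 0 ≤ Pt i j) {n m : ℕ} {a b c : Fin S}
    (h1 : 0 < (Pt ^ n) a b) (h2 : 0 < (Pt ^ m) b c) :
    0 < (Pt ^ (n + m)) a c := by
  rw [pow_add, Matrix.mul_apply]
  refine lt_of_lt_of_le (mul_pos h1 h2) ?_
  exact Finset.single_le_sum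
    (fun k _ => mul_nonneg (matpow_nonneg Pt h n a k) (matpow_nonneg Pt h m k c))
    (Finset.mem_univ b)

lemma key_identity {S : ℕ} (P Pt T : Matrix (Fin S) (Fin S) ℝ)
    (hT2 : ∀ i j, T i j = 1 + ∑ k ∈ Finset.univ.filter (fun k => k ≠ j), P i k * T k j)
    (μt : Fin S → ℝ) (hμt : IsStationaryDist Pt μt) (j : Fin S) :
    1 - μt j * T j j =
      ∑ i, μt i * ∑ k, (Pt - P) i k * (if k = j then 0 else T k j) := by
  classical
  set t : Fin S → ℝ := fun k => if k = j then 0 else T k j with ht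
  have h1 : ∀ i, T i j = 1 + ∑ k, P i k * t k := by
    intro i
    rw [hT2 i j]
    congr 1
    rw [Finset.sum_filter]
    refine Finset.sum_congr rfl fun k _ => ?_
    by_cases h : k = j <;> simp [ht, h]
  have hE1 : ∑ i, μt i * (1 + t i - T i j) = 1 - μt j * T j j := by
    have e : ∀ i, μt i * (1 + t i - T i j)
        = μt i + (if i = j then -(μt j * T j j) else 0) := by
      intro i
      by_cases h : i = j
      · subst h; simp [ht]; ring
      · simp [ht, h]
    rw [Finset.sum_congr rfl fun i _ => e i, Finset.sum_add_distrib, hμt.2.1]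
    simp only [Finset.sum_ite_eq', Finset.mem_univ, if_true]
    ring
  have hE2 : ∑ i, μt i * (1 + t i - T i j) = ∑ i, μt i * ∑ k, (Pt - P) i k * t k := by
    calc ∑ i, μt i * (1 + t i - T i j)
        = ∑ i, (μt i * t i - ∑ k, μt i * P i k * t k) := by
          refine Finset.sum_congr rfl fun i _ => ?_
          have e : μt i * (1 + t i - T i j) = μt i * t i - μt i * ∑ k, P i k * t k := by
            rw [h1 i]; ring
          rw [e, Finset.mul_sum]
          simp [mul_assoc]
      _ = (∑ i, μt i * t i) - ∑ i, ∑ k, μt i * P i k * t k := Finset.sum_sub_distrib _ _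
      _ = (∑ i, μt i * t i) - ∑ k, ∑ i, μt i * P i k * t k := by rw [Finset.sum_comm]
      _ = (∑ i, μt i * t i) - ∑ k, (∑ i, μt i * P i k) * t k := by
          congr 1
          refine Finset.sum_congr rfl fun k _ => ?_
          rw [Finset.sum_mul]
      _ = (∑ i, μt i * t i) - ∑ k, (μt k - ∑ i, μt i * (Pt - P) i k) * t k := by
          congr 1
          refine Finset.sum_congr rfl fun k _ => ?_
          congr 1
          have hs := hμt.2.2 k
          have e : ∀ i, μt i * P i k = μt i * Pt i k - μt i * (Pt - P) i k := fun i => by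
            simp [Matrix.sub_apply]; ring
          rw [Finset.sum_congr rfl fun i _ => e i, Finset.sum_sub_distrib, hs]
      _ = ∑ k, (∑ i, μt i * (Pt - P) i k) * t k := by
          have e : ∀ k : Fin S, (μt k - ∑ i, μt i * (Pt - P) i k) * t k
              = μt k * t k - (∑ i, μt i * (Pt - P) i k) * t k := fun k => by ring
          rw [Finset.sum_congr rfl fun k _ => e k, Finset.sum_sub_distrib]
          ring
      _ = ∑ i, μt i * ∑ k, (Pt - P) i k * t k := by
          have e : ∀ k : Fin S, (∑ i, μt i * (Pt - P) i k) * t k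
              = ∑ i, μt i * ((Pt - P) i k * t k) := fun k => by
            rw [Finset.sum_mul]
            exact Finset.sum_congr rfl fun i _ => by ring
          rw [Finset.sum_congr rfl fun k _ => e k, Finset.sum_comm]
          exact Finset.sum_congr rfl fun i _ => (Finset.mul_sum _ _ _).symm
  rw [← hE1, hE2]

theorem stationary_distribution_perturbation
    {S : ℕ} (hS : 2 ≤ S)
    (P Pt : Matrix (Fin S) (Fin S) ℝ)
    (hP : RowStochastic P) (hPt : RowStochastic Pt)
    (hirr : MCIrreducible P)
    (μ : Fin S → ℝ) (hμ : IsStationaryDist P μ)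
    (T : Matrix (Fin S) (Fin S) ℝ) (hT : IsMFPT P T)
    (Tmax : ℝ) (hTmax : IsGreatest {x : ℝ | ∃ i j : Fin S, i ≠ j ∧ x = T i j} Tmax)
    (hE : matNormInf (Pt - P) < 2 / (S * Tmax)) :
    MCIrreducible Pt ∧
      ∀ μt : Fin S → ℝ, IsStationaryDist Pt μt →
        ∀ j, |μt j - μ j| ≤ μ j * (S * matNormInf (Pt - P) / 2) * Tmax := by
  classical
  obtain ⟨hPnn, hProw⟩ := hP
  obtain ⟨hPtnn, hPtrow⟩ := hPt
  set N := matNormInf (Pt - P) with hN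
  have hSR : (2:ℝ) ≤ (S:ℝ) := by exact_mod_cast hS
  have hTmaxpos : 0 < Tmax := by
    obtain ⟨i, j, hij, he⟩ := hTmax.1
    exact he ▸ hT.1 i j
  have i0 : Fin S := ⟨0, by omega⟩
  have hNnn : 0 ≤ N := le_trans (abs_nonneg _) (abs_le_matNormInf _ i0 i0)
  have hE' : (S:ℝ) * N * Tmax / 2 < 1 := by
    have h2 : (0:ℝ) < (S:ℝ) * Tmax := by positivity
    have := (lt_div_iff₀ h2).mp hE
    nlinarith
  have hrow0 : ∀ i, ∑ k, (Pt - P) i k = 0 := fun i => by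
    simp [Matrix.sub_apply, Finset.sum_sub_distrib, hProw i, hPtrow i]
  -- the main estimate
  have hest : ∀ j i, |∑ k, (Pt - P) i k * (if k = j then 0 else T k j)|
      ≤ (S:ℝ) * N * Tmax / 2 := by
    intro j i
    set t : Fin S → ℝ := fun k => if k = j then 0 else T k j with ht
    have key : ∑ k, (Pt - P) i k * t k = ∑ k, (Pt - P) i k * (t k - Tmax / 2) := by
      have e : ∀ k : Fin S, (Pt - P) i k * (t k - Tmax / 2)
          = (Pt - P) i k * t k - (Pt - P) i k * (Tmax / 2) := fun k => by ring
      rw [Finset.sum_congr rfl fun k _ => e k, Finset.sum_sub_distrib,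
        ← Finset.sum_mul, hrow0 i]
      simp
    rw [key]
    refine le_trans (Finset.abs_sum_le_sum_abs _ _) ?_
    have hbound : ∀ k : Fin S, |(Pt - P) i k * (t k - Tmax / 2)| ≤ N * (Tmax / 2) := by
      intro k
      rw [abs_mul]
      have h0 : 0 ≤ t k := by
        by_cases h : k = j <;> simp [ht, h, (hT.1 k j).le]
      have h1 : t k ≤ Tmax := by
        by_cases h : k = j
        · simp [ht, h, hTmaxpos.le]
        · simpa [ht, h] using hTmax.2 ⟨k, j, h, rfl⟩
      have habs : |t k - Tmax / 2| ≤ Tmax / 2 := by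
        rw [abs_le]; constructor <;> linarith
      exact mul_le_mul (abs_le_matNormInf _ i k) habs (abs_nonneg _) hNnn
    calc ∑ k, |(Pt - P) i k * (t k - Tmax / 2)| ≤ ∑ _k : Fin S, N * (Tmax / 2) :=
          Finset.sum_le_sum fun k _ => hbound k
      _ = (S:ℝ) * N * Tmax / 2 := by
          simp [Finset.sum_const, Finset.card_univ]
          ring
  -- reachability under Pt
  have reach : ∀ j i : Fin S, i ≠ j → ∃ n : ℕ, 1 ≤ n ∧ 0 < (Pt ^ n) i j := by
    intro j i hij
    by_contra hno
    set t : Fin S → ℝ := fun k => if k = j then 0 else T k j with ht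
    set B : Finset (Fin S) :=
      Finset.univ.filter (fun a => a ≠ j ∧ ¬∃ n : ℕ, 1 ≤ n ∧ 0 < (Pt ^ n) a j) with hB
    have hiB : i ∈ B := by
      rw [hB, Finset.mem_filter]
      exact ⟨Finset.mem_univ i, hij, hno⟩
    obtain ⟨a, haB, hamin⟩ := Finset.exists_min_image B t ⟨i, hiB⟩
    have haB' := (Finset.mem_filter.mp haB).2
    -- closure: mass from a stays in B
    have hclose : ∀ k : Fin S, 0 < Pt a k → k ∈ B := by
      intro k hk
      rw [hB, Finset.mem_filter]
      refine ⟨Finset.mem_univ k, ?_, ?_⟩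
      · rintro rfl
        exact haB'.2 ⟨1, le_refl 1, by simpa [pow_one] using hk⟩
      · rintro ⟨m, hm, hpos⟩
        refine haB'.2 ⟨1 + m, by omega, ?_⟩
        exact matpow_trans Pt hPtnn (by simpa [pow_one] using hk) hpos
    -- the MFPT equation at (a, j)
    have h1 : T a j = 1 + ∑ k, P a k * t k := by
      rw [hT.2 a j]
      congr 1
      rw [Finset.sum_filter]
      refine Finset.sum_congr rfl fun k _ => ?_
      by_cases h : k = j <;> simp [ht, h]
    have hsplit : ∑ k, P a k * t k
        = ∑ k, Pt a k * t k - ∑ k, (Pt - P) a k * t k := by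
      rw [← Finset.sum_sub_distrib]
      refine Finset.sum_congr rfl fun k _ => ?_
      simp [Matrix.sub_apply]; ring
    have habs := hest j a
    have hlow : t a ≤ ∑ k, Pt a k * t k := by
      have : ∀ k : Fin S, Pt a k * t a ≤ Pt a k * t k := by
        intro k
        rcases (hPtnn a k).lt_or_eq with hk | hk
        · exact mul_le_mul_of_nonneg_left (hamin k (hclose k hk)) (hPtnn a k)
        · rw [← hk]; simp
      calc t a = (∑ k, Pt a k) * t a := by rw [hPtrow a]; ring
        _ = ∑ k, Pt a k * t a := by rw [Finset.sum_mul]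
        _ ≤ ∑ k, Pt a k * t k := Finset.sum_le_sum fun k _ => this k
    have hta : t a = T a j := by simp [ht, haB'.1]
    have : |∑ k, (Pt - P) a k * t k| < 1 := lt_of_le_of_lt habs hE'
    rw [abs_lt] at this
    rw [hta] at hlow
    rw [hsplit] at h1
    linarith
  constructor
  · -- irreducibility of Pt
    intro a b
    by_cases hab : a = b
    · subst hab
      have : Nontrivial (Fin S) := by
        refine ⟨⟨0, by omega⟩, ⟨1, by omega⟩, ?_⟩
        simp [Fin.ext_iff]
      obtain ⟨k, hk⟩ := exists_ne a
      obtain ⟨n, hn, hn'⟩ := reach k a (Ne.symm hk)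
      obtain ⟨m, hm, hm'⟩ := reach a k hk
      exact ⟨n + m, by omega, matpow_trans Pt hPtnn hn' hm'⟩
    · exact reach b a hab
  · -- the perturbation bound
    intro μt hμt j
    have hid := key_identity P Pt T hT.2 μt hμt j
    have hid0 := key_identity P P T hT.2 μ hμ j
    have hz : (∑ i, μ i * ∑ k, (P - P) i k * (if k = j then 0 else T k j)) = 0 := by
      simp [Matrix.sub_apply]
    rw [hz] at hid0
    have hμT : μ j * T j j = 1 := by linarith
    have hμjnn : 0 ≤ μ j := hμ.1 j
    set A := ∑ i, μt i * ∑ k, (Pt - P) i k * (if k = j then 0 else T k j) with hA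
    have hdiff : μt j - μ j = -(μ j * A) := by
      have e1 : 1 - μt j * T j j = A := hid
      linear_combination (-(μ j)) * e1 - μt j * hμT
    have hAbound : |A| ≤ (S:ℝ) * N * Tmax / 2 := by
      rw [hA]
      refine le_trans (Finset.abs_sum_le_sum_abs _ _) ?_
      have : ∀ i : Fin S, |μt i * ∑ k, (Pt - P) i k * (if k = j then 0 else T k j)|
          ≤ μt i * ((S:ℝ) * N * Tmax / 2) := by
        intro i
        rw [abs_mul, abs_of_nonneg (hμt.1 i)]
        exact mul_le_mul_of_nonneg_left (hest j i) (hμt.1 i)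
      refine le_trans (Finset.sum_le_sum fun i _ => this i) ?_
      rw [← Finset.sum_mul, hμt.2.1, one_mul]
    calc |μt j - μ j| = μ j * |A| := by
          rw [hdiff, abs_neg, abs_mul, abs_of_nonneg hμjnn]
      _ ≤ μ j * ((S:ℝ) * N * Tmax / 2) :=
          mul_le_mul_of_nonneg_left hAbound hμjnn
      _ = μ j * ((S:ℝ) * N / 2) * Tmax := by ring
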